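/- Let U, V be words over X ∪ {a}. The equation U = V has a solution (a substitution h with h(U) = h(V)) over any alphabet A containing a if and only if it has a solution in which every variable is mapped to a power of a. -/
import Mathlib


/-- Substitution for words over `X ∪ {a}` (variables `some x`, the terminal `a` is `none`). -/
def asubst {A X : Type*} (a : A) (σ : X → List A) (w : List (Option X)) : List A :=
  w.flatMap (fun o => o.elim [a] σ)

lemma asubst_repl {A X : Type*} (a : A) (σ : X → List A) (w : List (Option X)) :
    asubst a (fun x => List.replicate (σ x).length a) w =
      List.replicate (asubst a σ w).length a := by
  induction w with
  | nil => rfl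
  | cons o t ih =>
      cases o with
      | none =>
          simp only [asubst, List.flatMap_cons, Option.elim] at *
          rw [ih]
          simp [List.replicate_succ]
      | some x =>
          simp only [asubst, List.flatMap_cons, Option.elim] at *
          rw [ih, ← List.replicate_add]
          simp [Nat.add_comm]
theorem stmt5 {A X : Type*} (a : A) (U V : List (Option X)) :
    (∃ σ : X → List A, asubst a σ U = asubst a σ V) ↔
    (∃ σ : X → List A, (∀ x : X, ∃ k : ℕ, σ x = List.replicate k a) ∧
      asubst a σ U = asubst a σ V) := by
  constructor
  · rintro ⟨σ, h⟩
    refine ⟨fun x => List.replicate (σ x).length a, fun x => ⟨_, rfl⟩, ?_⟩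
    rw [asubst_repl, asubst_repl, h]
  · rintro ⟨σ, _, h⟩
    exact ⟨σ, h⟩
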